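/- Suppose μ > 0 and λ ≥ 0. For every n×n complex matrix M, ‖M‖_F² ≤ (nλ + 2μ)·Re⟨C⁻¹M, M⟩_F. (This is the coercivity of C⁻¹ underlying the paper's norm equivalence between ‖·‖_F and ‖·‖_{C⁻¹}; for λ = 0 the constant reduces to the paper's constant 2μ.) -/

import Mathlib

open Matrix BigOperators

/-- The inverse Hooke tensor `C⁻¹ M = (1/(2μ)) M − (λ/(2μ(nλ+2μ))) tr(M) I`. -/
noncomputable def hookeCinv (n : ℕ) (μ lam : ℝ) (M : Matrix (Fin n) (Fin n) ℂ) :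
    Matrix (Fin n) (Fin n) ℂ :=
  ((1 / (2 * μ) : ℝ) : ℂ) • M -
    (((lam / (2 * μ * ((n : ℝ) * lam + 2 * μ)) : ℝ) : ℂ) * Matrix.trace M) •
      (1 : Matrix (Fin n) (Fin n) ℂ)

/-- The Frobenius inner product `⟨A,B⟩_F = ∑_{i,j} A_{ij} conj(B_{ij})`. -/
noncomputable def frob (n : ℕ) (A B : Matrix (Fin n) (Fin n) ℂ) : ℂ :=
  ∑ i, ∑ j, A i j * (starRingEnd ℂ) (B i j)

/-- The squared Frobenius norm `‖A‖_F² = ∑_{i,j} |A_{ij}|²`. -/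
noncomputable def frobNormSq (n : ℕ) (A : Matrix (Fin n) (Fin n) ℂ) : ℝ :=
  ∑ i, ∑ j, ‖A i j‖ ^ 2

lemma frob_smul_sub (n : ℕ) (c d : ℂ) (A B C : Matrix (Fin n) (Fin n) ℂ) :
    frob n (c • A - d • B) C = c * frob n A C - d * frob n B C := by
  unfold frob
  simp only [Matrix.sub_apply, Matrix.smul_apply, smul_eq_mul, sub_mul,
    Finset.sum_sub_distrib, Finset.mul_sum, mul_assoc]

lemma frob_self (n : ℕ) (M : Matrix (Fin n) (Fin n) ℂ) :
    frob n M M = (frobNormSq n M : ℂ) := by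
  unfold frob frobNormSq
  push_cast
  refine Finset.sum_congr rfl fun i _ => Finset.sum_congr rfl fun j _ => ?_
  rw [Complex.mul_conj]
  norm_cast
  rw [← Complex.sq_norm]

lemma frob_one (n : ℕ) (M : Matrix (Fin n) (Fin n) ℂ) :
    frob n 1 M = (starRingEnd ℂ) (Matrix.trace M) := by
  unfold frob
  rw [Matrix.trace, map_sum]
  refine Finset.sum_congr rfl fun i _ => ?_
  rw [Finset.sum_eq_single i]
  · simp [Matrix.one_apply, Matrix.diag]
  · intro b _ hb
    simp [Matrix.one_apply, Ne.symm hb]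
  · simp

lemma trace_sq_le (n : ℕ) (M : Matrix (Fin n) (Fin n) ℂ) :
    Complex.normSq (Matrix.trace M) ≤ (n : ℝ) * frobNormSq n M := by
  have h1 : ‖Matrix.trace M‖ ≤ ∑ i, ‖M i i‖ := by
    rw [Matrix.trace]
    exact norm_sum_le _ _
  have h2 : Complex.normSq (Matrix.trace M) = ‖Matrix.trace M‖ ^ 2 := by
    rw [← Complex.sq_norm]
  have h3 : (∑ i, ‖M i i‖) ^ 2 ≤ (n : ℝ) * ∑ i, ‖M i i‖ ^ 2 := by
    have := sq_sum_le_card_mul_sum_sq (s := (Finset.univ : Finset (Fin n)))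
      (f := fun i => ‖M i i‖)
    simpa using this
  have h4 : ∑ i, ‖M i i‖ ^ 2 ≤ frobNormSq n M := by
    unfold frobNormSq
    refine Finset.sum_le_sum fun i _ => ?_
    exact Finset.single_le_sum (fun j _ => sq_nonneg ‖M i j‖) (Finset.mem_univ i)
  calc Complex.normSq (Matrix.trace M) = ‖Matrix.trace M‖ ^ 2 := h2
    _ ≤ (∑ i, ‖M i i‖) ^ 2 := by
        apply pow_le_pow_left₀ (norm_nonneg _) h1
    _ ≤ (n : ℝ) * ∑ i, ‖M i i‖ ^ 2 := h3
    _ ≤ (n : ℝ) * frobNormSq n M := by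
        apply mul_le_mul_of_nonneg_left h4 (Nat.cast_nonneg n)

lemma frobNormSq_nonneg (n : ℕ) (M : Matrix (Fin n) (Fin n) ℂ) :
    0 ≤ frobNormSq n M := by
  unfold frobNormSq
  positivity

/-- Coercivity of `C⁻¹`: for `μ > 0` and `λ ≥ 0`,
`‖M‖_F² ≤ (nλ + 2μ) Re⟨C⁻¹M, M⟩_F`. -/
theorem frob_hookeCinv_coercive (n : ℕ) (hn : 1 ≤ n) (μ lam : ℝ) (hμ : 0 < μ)
    (hlam : 0 ≤ lam) (M : Matrix (Fin n) (Fin n) ℂ) :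
    frobNormSq n M ≤
      ((n : ℝ) * lam + 2 * μ) * (frob n (hookeCinv n μ lam M) M).re := by
  set F : ℝ := frobNormSq n M with hF
  set T : ℂ := Matrix.trace M with hT
  set b : ℝ := lam / (2 * μ * ((n : ℝ) * lam + 2 * μ)) with hbdef
  have hfrob : frob n (hookeCinv n μ lam M) M =
      ((1 / (2 * μ) : ℝ) : ℂ) * frob n M M - ((b : ℂ) * T) * frob n 1 M :=
    frob_smul_sub n _ _ M 1 M
  have hre : (frob n (hookeCinv n μ lam M) M).re =
      (1 / (2 * μ)) * F - b * Complex.normSq T := by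
    rw [hfrob, frob_self, frob_one, ← hF, ← hT, mul_assoc, Complex.mul_conj,
      ← Complex.ofReal_mul, ← Complex.ofReal_mul, ← Complex.ofReal_sub,
      Complex.ofReal_re]
  rw [hre]
  have hpos : 0 < (n : ℝ) * lam + 2 * μ := by positivity
  have h2μ : (0:ℝ) < 2 * μ := by linarith
  have hkey : lam * Complex.normSq T ≤ (n : ℝ) * lam * F := by
    calc lam * Complex.normSq T ≤ lam * ((n : ℝ) * F) :=
          mul_le_mul_of_nonneg_left (trace_sq_le n M) hlam
      _ = (n : ℝ) * lam * F := by ring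
  have heq : ((n : ℝ) * lam + 2 * μ) * ((1 / (2 * μ)) * F - b * Complex.normSq T)
      = (((n : ℝ) * lam + 2 * μ) * F - lam * Complex.normSq T) / (2 * μ) := by
    rw [hbdef]
    field_simp
  rw [heq, le_div_iff₀ h2μ]
  nlinarith [Complex.normSq_nonneg T, frobNormSq_nonneg n M]
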